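/- Suppose E and E' are measurable subsets of ℝ^k, E is contained in the open halfspace W = {v : e'Ω^{-1}v < δ}, and E' ∩ W^c has positive Gaussian measure under N(γ⁰, Ω). Then there exists λ > 0 such that Pr_{N(γ⁰+λe, Ω)}(E') > Pr_{N(γ⁰+λe, Ω)}(E). -/

import Mathlib

open Matrix MeasureTheory

/-- The `k`-variate Gaussian density with mean `γ` and covariance `Ω`. -/
noncomputable def gaussDensity {k : ℕ} (γ : Fin k → ℝ) (Ω : Matrix (Fin k) (Fin k) ℝ)
    (v : Fin k → ℝ) : ℝ :=
  (2 * Real.pi) ^ (-(k : ℝ) / 2) * Ω.det ^ (-(1 : ℝ) / 2) *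
    Real.exp (-(1 / 2) * ((v - γ) ⬝ᵥ Ω⁻¹.mulVec (v - γ)))

namespace Stmt12Aux

open Filter

variable {k : ℕ}

lemma dot_symm {A : Matrix (Fin k) (Fin k) ℝ} (hA : A.IsHermitian) (x y : Fin k → ℝ) :
    x ⬝ᵥ A.mulVec y = y ⬝ᵥ A.mulVec x := by
  have hAt : Aᵀ = A := by
    rw [← A.conjTranspose_eq_transpose_of_trivial]; exact hA
  rw [Matrix.dotProduct_mulVec, ← Matrix.mulVec_transpose, hAt]
  exact dotProduct_comm _ _

lemma cont_dot (A : Matrix (Fin k) (Fin k) ℝ) (e : Fin k → ℝ) :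
    Continuous fun v : Fin k → ℝ => e ⬝ᵥ A.mulVec v := by
  simp only [dotProduct, Matrix.mulVec]
  fun_prop

lemma cont_quad (A : Matrix (Fin k) (Fin k) ℝ) :
    Continuous fun v : Fin k → ℝ => v ⬝ᵥ A.mulVec v := by
  simp only [dotProduct, Matrix.mulVec]
  fun_prop

lemma quad_smul (A : Matrix (Fin k) (Fin k) ℝ) (t : ℝ) (x : Fin k → ℝ) :
    (t • x) ⬝ᵥ A.mulVec (t • x) = t ^ 2 * (x ⬝ᵥ A.mulVec x) := by
  rw [Matrix.mulVec_smul, dotProduct_smul, smul_dotProduct]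
  simp [smul_eq_mul]; ring

lemma posdef_lower {A : Matrix (Fin k) (Fin k) ℝ} (hA : A.PosDef) (hk : 0 < k) :
    ∃ c : ℝ, 0 < c ∧ ∀ x : Fin k → ℝ, c * ∑ i, x i ^ 2 ≤ x ⬝ᵥ A.mulVec x := by
  haveI : NeZero k := ⟨hk.ne'⟩
  have hsne : (Metric.sphere (0 : Fin k → ℝ) 1).Nonempty :=
    NormedSpace.sphere_nonempty.mpr zero_le_one
  obtain ⟨x0, hx0S, hmin⟩ := (isCompact_sphere (0 : Fin k → ℝ) 1).exists_isMinOn hsne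
    (cont_quad A).continuousOn
  have hx0 : x0 ≠ 0 := by
    intro h
    rw [h] at hx0S
    simp at hx0S
  have hc0 : 0 < x0 ⬝ᵥ A.mulVec x0 := by
    have := hA.dotProduct_mulVec_pos hx0
    simpa using this
  refine ⟨(x0 ⬝ᵥ A.mulVec x0) / k, div_pos hc0 (by exact_mod_cast hk), fun x => ?_⟩
  rcases eq_or_ne x 0 with rfl | hx
  · simp
  · have hnx : 0 < ‖x‖ := norm_pos_iff.mpr hx
    have hmem : ‖x‖⁻¹ • x ∈ Metric.sphere (0 : Fin k → ℝ) 1 := by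
      simp [norm_smul, abs_of_pos (inv_pos.mpr hnx), inv_mul_cancel₀ hnx.ne']
    have hge : x0 ⬝ᵥ A.mulVec x0 ≤ (‖x‖⁻¹ • x) ⬝ᵥ A.mulVec (‖x‖⁻¹ • x) := hmin hmem
    rw [quad_smul] at hge
    have hQx : (x0 ⬝ᵥ A.mulVec x0) * ‖x‖ ^ 2 ≤ x ⬝ᵥ A.mulVec x := by
      have h2 : (0:ℝ) < ‖x‖ ^ 2 := by positivity
      calc (x0 ⬝ᵥ A.mulVec x0) * ‖x‖ ^ 2
          ≤ ((‖x‖⁻¹) ^ 2 * (x ⬝ᵥ A.mulVec x)) * ‖x‖ ^ 2 := by nlinarith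
        _ = x ⬝ᵥ A.mulVec x := by field_simp
    have hsum : ∑ i, x i ^ 2 ≤ k * ‖x‖ ^ 2 := by
      calc ∑ i, x i ^ 2 ≤ ∑ _i : Fin k, ‖x‖ ^ 2 := by
            refine Finset.sum_le_sum fun i _ => ?_
            have := norm_le_pi_norm x i
            have h0 : |x i| ≤ ‖x‖ := by simpa [Real.norm_eq_abs] using this
            nlinarith [abs_nonneg (x i), sq_abs (x i)]
        _ = k * ‖x‖ ^ 2 := by simp [Finset.sum_const, nsmul_eq_mul]
    have hk' : (0:ℝ) < k := by exact_mod_cast hk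
    calc (x0 ⬝ᵥ A.mulVec x0) / k * ∑ i, x i ^ 2
        ≤ (x0 ⬝ᵥ A.mulVec x0) / k * (k * ‖x‖ ^ 2) := by
          apply mul_le_mul_of_nonneg_left hsum (le_of_lt (div_pos hc0 hk'))
      _ = (x0 ⬝ᵥ A.mulVec x0) * ‖x‖ ^ 2 := by field_simp
      _ ≤ x ⬝ᵥ A.mulVec x := hQx

lemma integrable_exp_neg_mul_sum {c : ℝ} (hc : 0 < c) :
    Integrable (fun x : Fin k → ℝ => Real.exp (-c * ∑ i, x i ^ 2)) := by
  have h := (GaussianFourier.integrable_cexp_neg_mul_sum_add (b := (c : ℂ))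
    (by simpa using hc) (fun _ : Fin k => (0 : ℂ))).norm
  refine h.congr (Eventually.of_forall fun v => ?_)
  simp only [Complex.norm_exp]
  congr 1
  have : -(c:ℂ) * ∑ i, (v i : ℂ) ^ 2 + ∑ i, (0:ℂ) * (v i) = ((-c * ∑ i, v i ^ 2 : ℝ) : ℂ) := by
    push_cast; simp
  rw [this, Complex.ofReal_re]

lemma integrable_gaussDensity {Ω : Matrix (Fin k) (Fin k) ℝ} (hΩ : Ω.PosDef) (hk : 0 < k)
    (γ : Fin k → ℝ) : Integrable (gaussDensity γ Ω) := by
  obtain ⟨c, hc, hcQ⟩ := posdef_lower hΩ.inv hk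
  have hbase : Integrable (fun x : Fin k → ℝ => Real.exp (-(1/2) * (x ⬝ᵥ Ω⁻¹.mulVec x))) := by
    refine (integrable_exp_neg_mul_sum (c := c/2) (by positivity)).mono
      ((Real.continuous_exp.comp (continuous_const.mul (cont_quad Ω⁻¹))).aestronglyMeasurable)
      (Eventually.of_forall fun v => ?_)
    rw [Real.norm_eq_abs, Real.norm_eq_abs, Real.abs_exp, Real.abs_exp, Real.exp_le_exp]
    have := hcQ v
    nlinarith
  have h2 := (hbase.comp_sub_right γ).const_mul
    ((2 * Real.pi) ^ (-(k : ℝ) / 2) * Ω.det ^ (-(1 : ℝ) / 2))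
  refine h2.congr (Eventually.of_forall fun v => ?_)
  simp [gaussDensity]

lemma gaussDensity_pos {Ω : Matrix (Fin k) (Fin k) ℝ} (hΩ : Ω.PosDef) (γ v : Fin k → ℝ) :
    0 < gaussDensity γ Ω v := by
  unfold gaussDensity
  have h1 : (0:ℝ) < (2 * Real.pi) ^ (-(k : ℝ) / 2) :=
    Real.rpow_pos_of_pos (by positivity) _
  have h2 : (0:ℝ) < Ω.det ^ (-(1 : ℝ) / 2) := Real.rpow_pos_of_pos hΩ.det_pos _
  positivity

lemma tilt {Ω : Matrix (Fin k) (Fin k) ℝ} (hΩ : Ω.PosDef) (γ0 e : Fin k → ℝ) (l : ℝ)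
    (v : Fin k → ℝ) :
    gaussDensity (γ0 + l • e) Ω v =
      Real.exp (l * (e ⬝ᵥ Ω⁻¹.mulVec v) - l * (e ⬝ᵥ Ω⁻¹.mulVec γ0)
          - l ^ 2 / 2 * (e ⬝ᵥ Ω⁻¹.mulVec e)) * gaussDensity γ0 Ω v := by
  have hsym := dot_symm (A := Ω⁻¹) hΩ.inv.isHermitian
  unfold gaussDensity
  rw [mul_left_comm, ← Real.exp_add]
  congr 2
  rw [sub_add_eq_sub_sub]
  simp only [Matrix.mulVec_sub, Matrix.mulVec_smul, sub_dotProduct,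
    dotProduct_sub, smul_dotProduct, dotProduct_smul, smul_eq_mul]
  rw [hsym v e, hsym γ0 e, hsym γ0 v]
  ring

end Stmt12Aux

open Stmt12Aux Filter

/-- if `E` is contained in the open halfspace `W = {v : e'Ω⁻¹v < δ}` and
`E' ∩ Wᶜ` has positive Gaussian measure under `N(γ⁰, Ω)`, then for some `λ > 0` the
`N(γ⁰+λe, Ω)` probability of `E'` exceeds that of `E`. -/
theorem stmt12 {k : ℕ} (Ω : Matrix (Fin k) (Fin k) ℝ) (hΩ : Ω.PosDef)
    (γ0 e : Fin k → ℝ) (he : e ≠ 0) (δ : ℝ)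
    (E E' : Set (Fin k → ℝ)) (hE : MeasurableSet E) (hE' : MeasurableSet E')
    (hEW : E ⊆ {v : Fin k → ℝ | e ⬝ᵥ Ω⁻¹.mulVec v < δ})
    (hpos : 0 < ∫ v in E' ∩ {v : Fin k → ℝ | e ⬝ᵥ Ω⁻¹.mulVec v < δ}ᶜ, gaussDensity γ0 Ω v) :
    ∃ l : ℝ, 0 < l ∧
      (∫ v in E, gaussDensity (γ0 + l • e) Ω v) <
        ∫ v in E', gaussDensity (γ0 + l • e) Ω v := by
  rcases Nat.eq_zero_or_pos k with hk | hk
  · subst hk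
    exact absurd (funext fun i => i.elim0 : e = 0) he
  -- notation
  set g : (Fin k → ℝ) → ℝ := gaussDensity γ0 Ω with hg
  set s : (Fin k → ℝ) → ℝ := fun v => e ⬝ᵥ Ω⁻¹.mulVec v with hsdef
  have hscont : Continuous s := cont_dot Ω⁻¹ e
  have hWm : MeasurableSet {v : Fin k → ℝ | e ⬝ᵥ Ω⁻¹.mulVec v < δ} :=
    (isOpen_lt hscont continuous_const).measurableSet
  -- tilt with constant split off
  have tilt' : ∀ (l : ℝ) (v : Fin k → ℝ), gaussDensity (γ0 + l • e) Ω v =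
      Real.exp (l * δ - l * (e ⬝ᵥ Ω⁻¹.mulVec γ0) - l ^ 2 / 2 * (e ⬝ᵥ Ω⁻¹.mulVec e)) *
        (Real.exp (l * (s v - δ)) * g v) := by
    intro l v
    rw [tilt hΩ γ0 e l v, ← mul_assoc, ← Real.exp_add]
    congr 2
    simp only [hsdef]
    ring
  -- integrability of tilted integrand
  have hFint : ∀ l : ℝ, Integrable (fun v => Real.exp (l * (s v - δ)) * g v) := by
    intro l
    have h := (integrable_gaussDensity hΩ hk (γ0 + l • e)).const_mul
      (Real.exp (l * δ - l * (e ⬝ᵥ Ω⁻¹.mulVec γ0) - l ^ 2 / 2 * (e ⬝ᵥ Ω⁻¹.mulVec e)))⁻¹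
    refine h.congr (Eventually.of_forall fun v => ?_)
    simp only [tilt', ← mul_assoc, inv_mul_cancel₀ (Real.exp_ne_zero _), one_mul]
  -- dominated convergence on E
  have hlim : Tendsto (fun n : ℕ => ∫ v in E, Real.exp ((n : ℝ) * (s v - δ)) * g v)
      atTop (nhds 0) := by
    have h := MeasureTheory.tendsto_integral_of_dominated_convergence
      (μ := volume.restrict E)
      (F := fun (n : ℕ) v => Real.exp ((n : ℝ) * (s v - δ)) * g v)
      (f := fun _ => (0 : ℝ)) (bound := g)
      (fun n => ((hFint n).aestronglyMeasurable).restrict)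
      ((integrable_gaussDensity hΩ hk γ0).integrableOn)
      ?_ ?_
    · simpa using h
    · intro n
      filter_upwards [ae_restrict_mem hE] with v hv
      have hvs : s v - δ < 0 := sub_neg.mpr (hEW hv)
      have h1 : Real.exp ((n : ℝ) * (s v - δ)) ≤ 1 :=
        Real.exp_le_one_iff.mpr (mul_nonpos_of_nonneg_of_nonpos (Nat.cast_nonneg n) hvs.le)
      have hgv : 0 < g v := gaussDensity_pos hΩ γ0 v
      rw [Real.norm_eq_abs, abs_of_pos (by positivity)]
      nlinarith
    · filter_upwards [ae_restrict_mem hE] with v hv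
      have hvs : s v - δ < 0 := sub_neg.mpr (hEW hv)
      have h1 : Tendsto (fun n : ℕ => (n : ℝ) * (s v - δ)) atTop atBot :=
        Tendsto.atTop_mul_const_of_neg hvs tendsto_natCast_atTop_atTop
      have h2 := (Real.tendsto_exp_atBot.comp h1).mul_const (g v)
      simpa using h2
  -- pick n
  obtain ⟨n, hn⟩ := ((hlim.eventually_lt_const hpos).and (eventually_ge_atTop 1)).exists
  obtain ⟨hnlt, hn1⟩ := hn
  have hl0 : (0 : ℝ) < (n : ℝ) := by exact_mod_cast hn1
  refine ⟨(n : ℝ), hl0, ?_⟩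
  -- lower bound for E'
  have hmono1 : (∫ v in E' ∩ {v : Fin k → ℝ | e ⬝ᵥ Ω⁻¹.mulVec v < δ}ᶜ, g v) ≤
      ∫ v in E' ∩ {v : Fin k → ℝ | e ⬝ᵥ Ω⁻¹.mulVec v < δ}ᶜ,
        Real.exp ((n : ℝ) * (s v - δ)) * g v := by
    refine setIntegral_mono_on ((integrable_gaussDensity hΩ hk γ0).integrableOn)
      ((hFint n).integrableOn) (hE'.inter hWm.compl) (fun v hv => ?_)
    have hvs : δ ≤ s v := not_lt.mp hv.2
    have h1 : (1 : ℝ) ≤ Real.exp ((n : ℝ) * (s v - δ)) := by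
      rw [Real.one_le_exp_iff]
      exact mul_nonneg hl0.le (by linarith)
    have hgv : 0 < g v := gaussDensity_pos hΩ γ0 v
    nlinarith
  have hmono2 : (∫ v in E' ∩ {v : Fin k → ℝ | e ⬝ᵥ Ω⁻¹.mulVec v < δ}ᶜ,
        Real.exp ((n : ℝ) * (s v - δ)) * g v) ≤
      ∫ v in E', Real.exp ((n : ℝ) * (s v - δ)) * g v := by
    refine setIntegral_mono_set ((hFint n).integrableOn)
      (Eventually.of_forall fun v => ?_) (HasSubset.Subset.eventuallyLE Set.inter_subset_left)
    have hgv : 0 < g v := gaussDensity_pos hΩ γ0 v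
    positivity
  have key : (∫ v in E, Real.exp ((n : ℝ) * (s v - δ)) * g v) <
      ∫ v in E', Real.exp ((n : ℝ) * (s v - δ)) * g v :=
    lt_of_lt_of_le hnlt (le_trans hmono1 hmono2)
  calc (∫ v in E, gaussDensity (γ0 + (n : ℝ) • e) Ω v)
      = Real.exp ((n:ℝ) * δ - (n:ℝ) * (e ⬝ᵥ Ω⁻¹.mulVec γ0) - (n:ℝ) ^ 2 / 2 *
          (e ⬝ᵥ Ω⁻¹.mulVec e)) * ∫ v in E, Real.exp ((n : ℝ) * (s v - δ)) * g v := by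
        simp_rw [tilt']; rw [integral_const_mul]
    _ < Real.exp ((n:ℝ) * δ - (n:ℝ) * (e ⬝ᵥ Ω⁻¹.mulVec γ0) - (n:ℝ) ^ 2 / 2 *
          (e ⬝ᵥ Ω⁻¹.mulVec e)) * ∫ v in E', Real.exp ((n : ℝ) * (s v - δ)) * g v :=
        (mul_lt_mul_iff_right₀ (Real.exp_pos _)).mpr key
    _ = ∫ v in E', gaussDensity (γ0 + (n : ℝ) • e) Ω v := by
        simp_rw [tilt']; rw [integral_const_mul]
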